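/- For g(x) = ‖x‖₂ on R^n, the proximal mapping is prox_{γg}(x) = (1 - γ/‖x‖₂)x if ‖x‖₂ ≥ γ and 0 otherwise, and its B-subdifferential equals {I - (γ/‖x‖₂)(I - ww')} with w = x/‖x‖₂ when ‖x‖₂ > γ, equals {0} when ‖x‖₂ < γ, and equals the pair of both matrices when ‖x‖₂ = γ. -/

import Mathlib

open scoped RealInnerProductSpace
open Filter Topology

noncomputable section

abbrev Eucl (n : ℕ) := EuclideanSpace ℝ (Fin n)

/-- `p` is the proximal mapping of `g` with parameter `γ`:
`p x` minimizes `u ↦ g u + ‖u - x‖² / (2γ)`. -/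
def IsProx {n : ℕ} (γ : ℝ) (g : Eucl n → EReal) (p : Eucl n → Eucl n) : Prop :=
  ∀ x u, g (p x) + ((‖p x - x‖ ^ 2 / (2 * γ) : ℝ) : EReal)
        ≤ g u + ((‖u - x‖ ^ 2 / (2 * γ) : ℝ) : EReal)

/-- `g` is proper, lower semicontinuous and convex (with values in `ℝ ∪ {+∞}`). -/
def ProperLscConvex {n : ℕ} (g : Eucl n → EReal) : Prop :=
  (∃ x, g x ≠ ⊤) ∧ (∀ x, g x ≠ ⊥) ∧ LowerSemicontinuous g ∧
  (∀ x y : Eucl n, ∀ a b : ℝ, 0 ≤ a → 0 ≤ b → a + b = 1 →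
    g (a • x + b • y) ≤ (a : EReal) * g x + (b : EReal) * g y)

/-- B-subdifferential (limiting Jacobian) of a mapping `T` at `x`: limits of Jacobians
along sequences of differentiability points converging to `x`. -/
def Bsubdiff {n : ℕ} (T : Eucl n → Eucl n) (x : Eucl n) : Set (Eucl n →L[ℝ] Eucl n) :=
  { H | ∃ u : ℕ → Eucl n, (∀ k, DifferentiableAt ℝ T (u k)) ∧
      Tendsto u atTop (𝓝 x) ∧ Tendsto (fun k => fderiv ℝ T (u k)) atTop (𝓝 H) }

/-- Clarke generalized Jacobian: convex hull of the B-subdifferential. -/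
def ClarkeJacobian {n : ℕ} (T : Eucl n → Eucl n) (x : Eucl n) : Set (Eucl n →L[ℝ] Eucl n) :=
  convexHull ℝ (Bsubdiff T x)

/-- The outer product `w w'`, acting as `v ↦ ⟪w, v⟫ w`. -/
def outerProd {n : ℕ} (w : Eucl n) : Eucl n →L[ℝ] Eucl n :=
  (innerSL ℝ w).smulRight w

open Set

variable {n : ℕ}

def qmap (γ : ℝ) (x : Eucl n) : Eucl n :=
  if γ ≤ ‖x‖ then (1 - γ / ‖x‖) • x else 0

def Dmap (γ : ℝ) (x : Eucl n) : Eucl n →L[ℝ] Eucl n :=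
  (1 : Eucl n →L[ℝ] Eucl n) - (γ / ‖x‖) • ((1 : Eucl n →L[ℝ] Eucl n) - outerProd (‖x‖⁻¹ • x))

lemma hasFDerivAt_norm_eucl {x : Eucl n} (hx : x ≠ 0) :
    HasFDerivAt (fun y : Eucl n => ‖y‖) (innerSL ℝ (‖x‖⁻¹ • x)) x := by
  have h2 : HasFDerivAt (fun y : Eucl n => ‖y‖ ^ 2) (2 • innerSL ℝ x) x :=
    (hasStrictFDerivAt_norm_sq x).hasFDerivAt
  have hxn : (0:ℝ) < ‖x‖ := norm_pos_iff.mpr hx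
  have hne : ‖x‖ ^ 2 ≠ 0 := pow_ne_zero _ hxn.ne'
  have h3 := h2.sqrt hne
  have heq : (fun y : Eucl n => Real.sqrt (‖y‖ ^ 2)) = fun y : Eucl n => ‖y‖ := by
    funext y; rw [Real.sqrt_sq (norm_nonneg y)]
  rw [heq] at h3
  convert h3 using 1
  rfl
  rw [Real.sqrt_sq (norm_nonneg x)]
  ext v
  simp only [innerSL_apply_apply, ContinuousLinearMap.smul_apply, ContinuousLinearMap.coe_smul',
    Pi.smul_apply, innerSL_apply_apply, real_inner_smul_left, smul_eq_mul, nsmul_eq_mul]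
  field_simp
  ring

lemma hasFDerivAt_qmap {γ : ℝ} (hγ : 0 ≤ γ) {x : Eucl n} (hx : γ < ‖x‖) :
    HasFDerivAt (qmap γ) (Dmap γ x) x := by
  have hn : (0:ℝ) < ‖x‖ := lt_of_le_of_lt hγ hx
  have hx0 : x ≠ 0 := by simpa [norm_pos_iff] using hn
  have hne : ‖x‖ ≠ 0 := hn.ne'
  set w : Eucl n := ‖x‖⁻¹ • x with hw
  have h1 : HasFDerivAt (fun y : Eucl n => ‖y‖) (innerSL ℝ w) x := hasFDerivAt_norm_eucl hx0
  have h2 : HasFDerivAt (fun y : Eucl n => ‖y‖⁻¹) ((-(‖x‖ ^ 2)⁻¹) • innerSL ℝ w) x :=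
    (hasDerivAt_inv hne).comp_hasFDerivAt x h1
  have h3 := h2.smul (hasFDerivAt_id x)
  have h4 := (hasFDerivAt_id x).sub (h3.const_smul γ)
  have hopen : IsOpen {y : Eucl n | γ < ‖y‖} := isOpen_lt continuous_const continuous_norm
  have hev : (fun y : Eucl n => y - γ • (‖y‖⁻¹ • y)) =ᶠ[𝓝 x] qmap γ := by
    filter_upwards [hopen.mem_nhds hx] with y hy
    have hy0 : ‖y‖ ≠ 0 := (lt_of_le_of_lt hγ hy).ne'
    simp only [qmap, if_pos (le_of_lt hy)]
    rw [sub_smul, one_smul, div_eq_mul_inv, mul_smul]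
  have h5 := h4.congr_of_eventuallyEq hev.symm
  convert h5 using 1
  iterate 6 rfl
  refine ContinuousLinearMap.ext fun v => ?_
  simp only [Dmap, outerProd, ContinuousLinearMap.sub_apply,
    ContinuousLinearMap.one_apply, ContinuousLinearMap.smul_apply,
    ContinuousLinearMap.smulRight_apply, innerSL_apply_apply, ContinuousLinearMap.add_apply,
    ContinuousLinearMap.id_apply, id_eq, hw, real_inner_smul_left, smul_eq_mul]
  match_scalars <;> (field_simp; try left; try ring)

lemma continuousAt_Dmap (γ : ℝ) {x : Eucl n} (hx : x ≠ 0) : ContinuousAt (Dmap γ) x := by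
  have hne : ‖x‖ ≠ 0 := norm_ne_zero_iff.mpr hx
  have hcw : ContinuousAt (fun y : Eucl n => (‖y‖⁻¹ • y : Eucl n)) x :=
    (continuous_norm.continuousAt.inv₀ hne).smul continuousAt_id
  have houter : Continuous fun z : Eucl n => outerProd z := by
    have h1 : Continuous fun z : Eucl n =>
        (ContinuousLinearMap.smulRightL ℝ (Eucl n) (Eucl n)) (innerSL ℝ z) :=
      (ContinuousLinearMap.smulRightL ℝ (Eucl n) (Eucl n)).continuous.comp (innerSL ℝ).continuous
    exact h1.clm_apply continuous_id
  have h2 : ContinuousAt (fun y : Eucl n => outerProd (‖y‖⁻¹ • y)) x :=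
    houter.continuousAt.comp hcw
  exact continuousAt_const.sub
    (((continuousAt_const.div continuous_norm.continuousAt hne)).smul (continuousAt_const.sub h2))

lemma qmap_eventually_zero {γ : ℝ} {x : Eucl n} (hx : ‖x‖ < γ) :
    qmap γ =ᶠ[𝓝 x] (fun _ => (0 : Eucl n)) := by
  filter_upwards [(isOpen_lt continuous_norm continuous_const).mem_nhds hx] with y hy
  simp [qmap, not_le.mpr hy]

lemma hasFDerivAt_qmap_zero {γ : ℝ} {x : Eucl n} (hx : ‖x‖ < γ) :
    HasFDerivAt (qmap γ) (0 : Eucl n →L[ℝ] Eucl n) x :=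
  (hasFDerivAt_const (0 : Eucl n) x).congr_of_eventuallyEq (qmap_eventually_zero hx)

lemma qmap_scaled {γ : ℝ} (hγ : 0 < γ) {x : Eucl n} (hx : ‖x‖ = γ) (t : ℝ) (ht : -1 < t) :
    qmap γ (x + t • x) = if 0 ≤ t then t • x else 0 := by
  have hxt : x + t • x = (1 + t) • x := by module
  have h1t : (0:ℝ) < 1 + t := by linarith
  have hnorm : ‖x + t • x‖ = (1 + t) * γ := by
    rw [hxt, norm_smul, Real.norm_eq_abs, abs_of_pos h1t, hx]
  by_cases ht0 : 0 ≤ t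
  · have hle : γ ≤ ‖x + t • x‖ := by rw [hnorm]; nlinarith
    rw [qmap, if_pos hle, if_pos ht0, hnorm, hxt, smul_smul]
    congr 1
    field_simp
    ring
  · have hlt : ‖x + t • x‖ < γ := by rw [hnorm]; push_neg at ht0; nlinarith
    rw [qmap, if_neg (not_le.mpr hlt), if_neg ht0]

lemma qmap_sphere {γ : ℝ} {x : Eucl n} (hγ : 0 < γ) (hx : ‖x‖ = γ) : qmap γ x = 0 := by
  rw [qmap, if_pos (le_of_eq hx.symm), hx, div_self hγ.ne']
  simp

lemma not_diff_qmap {γ : ℝ} (hγ : 0 < γ) {x : Eucl n} (hx : ‖x‖ = γ) :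
    ¬ DifferentiableAt ℝ (qmap γ) x := by
  intro h
  have hx0 : x ≠ 0 := by
    intro h0; rw [h0, norm_zero] at hx; exact hγ.ne hx
  set L := fderiv ℝ (qmap γ) x with hLdef
  have hL : HasFDerivAt (qmap γ) L x := h.hasFDerivAt
  have hφ : HasDerivAt (fun t : ℝ => x + t • x) x 0 := by
    simpa using ((hasDerivAt_id (0:ℝ)).smul_const x).const_add x
  have hcomp : HasDerivAt (fun t : ℝ => qmap γ (x + t • x)) (L x) 0 := by
    have hL' : HasFDerivAt (qmap γ) L (x + (0:ℝ) • x) := by simpa using hL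
    exact HasFDerivAt.comp_hasDerivAt (l := qmap γ) (f := fun t : ℝ => x + t • x) (x := 0) hL' hφ
  have hq0 : qmap γ (x + (0:ℝ) • x) = 0 := by simpa using qmap_sphere hγ hx
  have habs : ∀ᶠ t : ℝ in 𝓝 0, |t - 0| < 1 := eventually_abs_sub_lt 0 one_pos
  -- right derivative
  have hIci : HasDerivWithinAt (fun t : ℝ => t • x) (L x) (Ici (0:ℝ)) 0 := by
    refine (hcomp.hasDerivWithinAt).congr_of_eventuallyEq ?_ (by simpa using hq0.symm)
    filter_upwards [self_mem_nhdsWithin, eventually_nhdsWithin_of_eventually_nhds habs]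
      with t ht ht1
    rw [qmap_scaled hγ hx t (by rw [abs_sub_lt_iff] at ht1; linarith [ht1.2]), if_pos (mem_Ici.mp ht)]
  have hIci' : HasDerivWithinAt (fun t : ℝ => t • x) x (Ici (0:ℝ)) 0 := by
    simpa using (((hasDerivAt_id (0:ℝ)).smul_const x).hasDerivWithinAt :
      HasDerivWithinAt (fun t : ℝ => t • x) _ (Ici (0:ℝ)) 0)
  have hu1 : L x = x := by
    rw [← hIci.derivWithin (uniqueDiffOn_Ici 0 0 self_mem_Ici),
      hIci'.derivWithin (uniqueDiffOn_Ici 0 0 self_mem_Ici)]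
  -- left derivative
  have hIic : HasDerivWithinAt (fun _ : ℝ => (0 : Eucl n)) (L x) (Iic (0:ℝ)) 0 := by
    refine (hcomp.hasDerivWithinAt).congr_of_eventuallyEq ?_ (by simpa using hq0.symm)
    filter_upwards [self_mem_nhdsWithin, eventually_nhdsWithin_of_eventually_nhds habs]
      with t ht ht1
    rcases eq_or_lt_of_le (mem_Iic.mp ht) with rfl | htlt
    · simpa using hq0.symm
    · rw [qmap_scaled hγ hx t (by rw [abs_sub_lt_iff] at ht1; linarith [ht1.2]),
        if_neg (not_le.mpr htlt)]
  have hIic' : HasDerivWithinAt (fun _ : ℝ => (0 : Eucl n)) (0 : Eucl n) (Iic (0:ℝ)) 0 :=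
    (hasDerivAt_const 0 (0 : Eucl n)).hasDerivWithinAt
  have hu2 : L x = 0 := by
    rw [← hIic.derivWithin (uniqueDiffOn_Iic 0 0 self_mem_Iic),
      hIic'.derivWithin (uniqueDiffOn_Iic 0 0 self_mem_Iic)]
  exact hx0 (by rw [← hu1, hu2])

lemma bsub_of_eventually {T : Eucl n → Eucl n} {x : Eucl n} {D : Eucl n → Eucl n →L[ℝ] Eucl n}
    (hd : ∀ᶠ y in 𝓝 x, HasFDerivAt T (D y) y) (hc : ContinuousAt D x) :
    Bsubdiff T x = {D x} := by
  ext H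
  constructor
  · rintro ⟨u, hdiff, hux, hH⟩
    have h1 : ∀ᶠ k in atTop, fderiv ℝ T (u k) = D (u k) := by
      filter_upwards [hux.eventually hd] with k hk
      exact hk.fderiv
    have h2 : Tendsto (fun k => D (u k)) atTop (𝓝 (D x)) := hc.tendsto.comp hux
    have h3 : Tendsto (fun k => fderiv ℝ T (u k)) atTop (𝓝 (D x)) :=
      h2.congr' (by filter_upwards [h1] with k hk; exact hk.symm)
    exact tendsto_nhds_unique hH h3
  · rintro rfl
    exact ⟨fun _ => x, fun _ => hd.self_of_nhds.differentiableAt, tendsto_const_nhds,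
      by simpa [hd.self_of_nhds.fderiv] using
        (tendsto_const_nhds : Tendsto (fun _ : ℕ => D x) atTop (𝓝 (D x)))⟩

lemma prox_min {γ : ℝ} (hγ : 0 < γ) (x u : Eucl n) :
    ‖qmap γ x‖ + ‖qmap γ x - x‖ ^ 2 / (2 * γ) + ‖u - qmap γ x‖ ^ 2 / (2 * γ)
      ≤ ‖u‖ + ‖u - x‖ ^ 2 / (2 * γ) := by
  set v := qmap γ x with hv
  have key : ∃ s : Eucl n, ‖s‖ ≤ 1 ∧ x - v = γ • s ∧ ⟪s, v⟫ = ‖v‖ := by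
    by_cases h : γ ≤ ‖x‖
    · have hx0 : (0:ℝ) < ‖x‖ := lt_of_lt_of_le hγ h
      have hne : ‖x‖ ≠ 0 := hx0.ne'
      refine ⟨‖x‖⁻¹ • x, ?_, ?_, ?_⟩
      · rw [norm_smul, Real.norm_eq_abs, abs_of_pos (inv_pos.mpr hx0), inv_mul_cancel₀ hne]
      · rw [hv, qmap, if_pos h]
        rw [smul_smul]
        have : γ * ‖x‖⁻¹ = γ / ‖x‖ := by rw [div_eq_mul_inv]
        rw [this]
        module
      · rw [hv, qmap, if_pos h, real_inner_smul_left, real_inner_smul_right,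
          real_inner_self_eq_norm_sq, norm_smul, Real.norm_eq_abs,
          abs_of_nonneg (by rw [sub_nonneg, div_le_one hx0]; exact h)]
        field_simp
        try ring
        try exact Or.inl trivial
    · push_neg at h
      refine ⟨γ⁻¹ • x, ?_, ?_, ?_⟩
      · rw [norm_smul, Real.norm_eq_abs, abs_of_pos (inv_pos.mpr hγ)]
        rw [inv_mul_le_iff₀ hγ]
        linarith
      · rw [hv, qmap, if_neg (not_le.mpr h), sub_zero, smul_smul, mul_inv_cancel₀ hγ.ne',
          one_smul]
      · rw [hv, qmap, if_neg (not_le.mpr h)]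
        simp
  obtain ⟨s, hs1, hs2, hs3⟩ := key
  have hsu : ⟪s, u⟫ ≤ ‖u‖ := by
    calc ⟪s, u⟫ ≤ ‖s‖ * ‖u‖ := real_inner_le_norm s u
    _ ≤ 1 * ‖u‖ := mul_le_mul_of_nonneg_right hs1 (norm_nonneg u)
    _ = ‖u‖ := one_mul _
  have expand : ‖u - x‖ ^ 2 = ‖v - x‖ ^ 2 + 2 * ⟪v - x, u - v⟫ + ‖u - v‖ ^ 2 := by
    have h0 : u - x = (v - x) + (u - v) := by abel
    rw [h0, @norm_add_sq_real]
  have hinner : ⟪v - x, u - v⟫ = -(γ * (⟪s, u⟫ - ‖v‖)) := by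
    have h0 : v - x = -(γ • s) := by rw [← hs2]; abel
    rw [h0, inner_neg_left, real_inner_smul_left, inner_sub_right, hs3]
    try ring
  have hsplit : (‖v - x‖ ^ 2 + 2 * ⟪v - x, u - v⟫ + ‖u - v‖ ^ 2) / (2 * γ)
      = ‖v - x‖ ^ 2 / (2 * γ) + ‖u - v‖ ^ 2 / (2 * γ) - (⟪s, u⟫ - ‖v‖) := by
    rw [hinner]
    field_simp
    try ring
    try exact Or.inl trivial
  rw [expand, hsplit]
  linarith

lemma prox_eq {γ : ℝ} (hγ : 0 < γ) {p : Eucl n → Eucl n}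
    (hp : IsProx γ (fun x : Eucl n => ((‖x‖ : ℝ) : EReal)) p) (x : Eucl n) :
    p x = qmap γ x := by
  have h1 := hp x (qmap γ x)
  simp only [← EReal.coe_add, EReal.coe_le_coe_iff] at h1
  have h2 := prox_min hγ x (p x)
  have h2γ : (0:ℝ) < 2 * γ := by linarith
  have h3 : ‖p x - qmap γ x‖ ^ 2 / (2 * γ) ≤ 0 := by linarith
  have h4 : ‖p x - qmap γ x‖ ^ 2 ≤ 0 := by
    by_contra hcon
    push_neg at hcon
    exact absurd h3 (not_le.mpr (div_pos hcon h2γ))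
  have h5 : ‖p x - qmap γ x‖ = 0 := by nlinarith [norm_nonneg (p x - qmap γ x)]
  rw [← sub_eq_zero]
  exact norm_eq_zero.mp h5

/-- For `g = ‖·‖₂`: the proximal mapping is `(1 - γ/‖x‖)x` if `‖x‖ ≥ γ` and `0` otherwise,
and its B-subdifferential is `{I - (γ/‖x‖)(I - ww')}` (with `w = x/‖x‖`) when `‖x‖ > γ`,
`{0}` when `‖x‖ < γ`, and the pair of both matrices when `‖x‖ = γ`. -/
theorem prox_euclidean_norm {n : ℕ} (γ : ℝ) (p : Eucl n → Eucl n)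
    (hγ : 0 < γ)
    (hp : IsProx γ (fun x : Eucl n => ((‖x‖ : ℝ) : EReal)) p) :
    (∀ x : Eucl n, p x = if γ ≤ ‖x‖ then (1 - γ / ‖x‖) • x else 0) ∧
    (∀ x : Eucl n,
      (γ < ‖x‖ → Bsubdiff p x =
        {(1 : Eucl n →L[ℝ] Eucl n) - (γ / ‖x‖) • ((1 : Eucl n →L[ℝ] Eucl n) - outerProd (‖x‖⁻¹ • x))}) ∧
      (‖x‖ < γ → Bsubdiff p x = {0}) ∧
      (‖x‖ = γ → Bsubdiff p x =
        {(1 : Eucl n →L[ℝ] Eucl n) - (γ / ‖x‖) • ((1 : Eucl n →L[ℝ] Eucl n) - outerProd (‖x‖⁻¹ • x)), 0})) := by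
  have hpq : ∀ x, p x = qmap γ x := prox_eq hγ hp
  have hpe : p = qmap γ := funext hpq
  constructor
  · intro x; rw [hpq x]; rfl
  · intro x
    rw [hpe]
    refine ⟨fun hx => ?_, fun hx => ?_, fun hx => ?_⟩
    · -- γ < ‖x‖
      have hx0 : x ≠ 0 := by
        intro h0; rw [h0, norm_zero] at hx; linarith
      have hopen : IsOpen {y : Eucl n | γ < ‖y‖} := isOpen_lt continuous_const continuous_norm
      have hd : ∀ᶠ y in 𝓝 x, HasFDerivAt (qmap γ) (Dmap γ y) y := by
        filter_upwards [hopen.mem_nhds hx] with y hy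
        exact hasFDerivAt_qmap hγ.le hy
      exact bsub_of_eventually hd (continuousAt_Dmap γ hx0)
    · -- ‖x‖ < γ
      have hopen : IsOpen {y : Eucl n | ‖y‖ < γ} := isOpen_lt continuous_norm continuous_const
      have hd : ∀ᶠ y in 𝓝 x, HasFDerivAt (qmap γ) ((fun _ : Eucl n => (0 : Eucl n →L[ℝ] Eucl n)) y) y := by
        filter_upwards [hopen.mem_nhds hx] with y hy
        exact hasFDerivAt_qmap_zero hy
      exact bsub_of_eventually hd continuousAt_const
    · -- ‖x‖ = γ
      have hγx : (0:ℝ) < ‖x‖ := by rw [hx]; exact hγ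
      have hx0 : x ≠ 0 := norm_pos_iff.mp hγx
      ext H
      simp only [Set.mem_insert_iff, Set.mem_singleton_iff]
      constructor
      · rintro ⟨u, hdiff, hux, hH⟩
        have hne : ∀ k, ‖u k‖ ≠ γ := fun k hk => not_diff_qmap hγ hk (hdiff k)
        by_cases hfreq : ∃ᶠ k in atTop, ‖u k‖ < γ
        · right
          obtain ⟨φ, hφ, hφP⟩ := extraction_of_frequently_atTop hfreq
          have ht : Tendsto (fun j => fderiv ℝ (qmap γ) (u (φ j))) atTop (𝓝 H) :=
            hH.comp hφ.tendsto_atTop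
          have hz : ∀ j, fderiv ℝ (qmap γ) (u (φ j)) = 0 :=
            fun j => (hasFDerivAt_qmap_zero (hφP j)).fderiv
          have ht0 : Tendsto (fun _ : ℕ => (0 : Eucl n →L[ℝ] Eucl n)) atTop (𝓝 H) :=
            ht.congr hz
          exact tendsto_nhds_unique ht0 tendsto_const_nhds
        · left
          have hev : ∀ᶠ k in atTop, γ < ‖u k‖ := by
            filter_upwards [not_frequently.mp hfreq] with k hk
            exact lt_of_le_of_ne (not_lt.mp hk) (Ne.symm (hne k))
          have hev2 : ∀ᶠ k in atTop, fderiv ℝ (qmap γ) (u k) = Dmap γ (u k) := by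
            filter_upwards [hev] with k hk
            exact (hasFDerivAt_qmap hγ.le hk).fderiv
          have h2 : Tendsto (fun k => Dmap γ (u k)) atTop (𝓝 (Dmap γ x)) :=
            (continuousAt_Dmap γ hx0).tendsto.comp hux
          have h3 : Tendsto (fun k => fderiv ℝ (qmap γ) (u k)) atTop (𝓝 (Dmap γ x)) :=
            h2.congr' (by filter_upwards [hev2] with k hk; exact hk.symm)
          exact tendsto_nhds_unique hH h3
      · have t1 : Tendsto (fun k : ℕ => ((k:ℝ)+1)⁻¹) atTop (𝓝 0) :=
          tendsto_inv_atTop_zero.comp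
            (tendsto_atTop_add_const_right _ 1 tendsto_natCast_atTop_atTop)
        have t2 : Tendsto (fun k : ℕ => ((k:ℝ)+2)⁻¹) atTop (𝓝 0) :=
          tendsto_inv_atTop_zero.comp
            (tendsto_atTop_add_const_right _ 2 tendsto_natCast_atTop_atTop)
        rintro (rfl | rfl)
        · -- outer sequence
          set c : ℕ → ℝ := fun k => 1 + ((k:ℝ)+1)⁻¹ with hc
          have hcpos : ∀ k, (0:ℝ) < c k := by
            intro k
            have : (0:ℝ) < ((k:ℝ)+1)⁻¹ := by positivity
            simp only [hc]; linarith
          have hnorm : ∀ k, ‖c k • x‖ = c k * γ := by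
            intro k
            rw [norm_smul, Real.norm_eq_abs, abs_of_pos (hcpos k), hx]
          have hgt : ∀ k, γ < ‖c k • x‖ := by
            intro k
            rw [hnorm k]
            have : (0:ℝ) < ((k:ℝ)+1)⁻¹ := by positivity
            have h1 : 1 < c k := by simp only [hc]; linarith
            nlinarith
          have hu : Tendsto (fun k => c k • x) atTop (𝓝 x) := by
            have hc1 : Tendsto c atTop (𝓝 1) := by
              simpa using (tendsto_const_nhds (x := (1:ℝ)) (f := atTop (α := ℕ))).add t1
            simpa using hc1.smul_const x
          refine ⟨fun k => c k • x, fun k => (hasFDerivAt_qmap hγ.le (hgt k)).differentiableAt,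
            hu, ?_⟩
          have h2 : Tendsto (fun k => Dmap γ (c k • x)) atTop (𝓝 (Dmap γ x)) :=
            (continuousAt_Dmap γ hx0).tendsto.comp hu
          exact h2.congr fun k => ((hasFDerivAt_qmap hγ.le (hgt k)).fderiv).symm
        · -- inner sequence
          set c : ℕ → ℝ := fun k => 1 - ((k:ℝ)+2)⁻¹ with hc
          have hck : ∀ k : ℕ, (0:ℝ) < ((k:ℝ)+2)⁻¹ ∧ ((k:ℝ)+2)⁻¹ < 1 := by
            intro k
            constructor
            · positivity
            · rw [inv_lt_one_iff₀]
              right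
              have : (0:ℝ) ≤ (k:ℝ) := Nat.cast_nonneg k
              linarith
          have hcpos : ∀ k, (0:ℝ) < c k := by
            intro k; have := hck k; simp only [hc]; linarith [this.1, this.2]
          have hlt : ∀ k, ‖c k • x‖ < γ := by
            intro k
            rw [norm_smul, Real.norm_eq_abs, abs_of_pos (hcpos k), hx]
            have := hck k
            have hlt1 : c k < 1 := by simp only [hc]; linarith [this.1]
            nlinarith
          have hu : Tendsto (fun k => c k • x) atTop (𝓝 x) := by
            have hc1 : Tendsto c atTop (𝓝 1) := by
              simpa using (tendsto_const_nhds (x := (1:ℝ)) (f := atTop (α := ℕ))).sub t2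
            simpa using hc1.smul_const x
          refine ⟨fun k => c k • x,
            fun k => (hasFDerivAt_qmap_zero (hlt k)).differentiableAt, hu, ?_⟩
          have hz : ∀ k, fderiv ℝ (qmap γ) (c k • x) = 0 :=
            fun k => (hasFDerivAt_qmap_zero (hlt k)).fderiv
          exact tendsto_const_nhds.congr fun k => (hz k).symm
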